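/- Let C_• be a left 𝒞-exact complex and D_• a left 𝒞-almost split complex in an additive k-linear subcategory 𝒞, and u_• : C_• → D_• a chain map such that u_0 does not factor through d_0^C. Then the mapping cone of the shifted map u_•[−1] is left 𝒞-exact. -/

import Mathlib

open CategoryTheory CategoryTheory.Limits

/-!
Statement 15 (Lemma "mapping cone").  `𝒞` is a `k`-linear (sub)category with
binary biproducts; complexes `0 → C_0 → C_1 → ⋯` are modelled as `ℕ`-indexed
sequences with differentials.  Left `𝒞`-exact: every `d_n` (`n > 0`) is a weak
cokernel of `d_{n−1}`.  Left `𝒞`-almost split: left `𝒞`-exact, nonsplit, `D_0`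
indecomposable, and every morphism with domain `D_0` that is not a split
monomorphism factors through `d_0^D`.  The mapping cone of `u_•[−1]` has
degree-`n` object `C_n ⊕ D_{n−1}` (so `C_0` in degree 0, as `D_{−1} = 0`) and
differential given by the matrix `((d_n^C, 0), (u_n, −d_{n−1}^D))`.
Theorem: if `u_0` does not factor through `d_0^C`, the cone is left `𝒞`-exact.
-/

/-- `g` is a weak cokernel of `f`. -/
def IsWeakCokernel {𝒞 : Type*} [Category 𝒞] [Limits.HasZeroMorphisms 𝒞]
    {X Y Z : 𝒞} (f : X ⟶ Y) (g : Y ⟶ Z) : Prop :=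
  f ≫ g = 0 ∧ ∀ (W : 𝒞) (h : Y ⟶ W), f ≫ h = 0 → ∃ k : Z ⟶ W, h = g ≫ k

/-- Degree-`n` object of the mapping cone of `u_•[−1]`: `C_n ⊕ D_{n−1}`. -/
noncomputable def coneObj {𝒞 : Type*} [Category 𝒞] [Preadditive 𝒞] [HasBinaryBiproducts 𝒞]
    (Cc Dd : ℕ → 𝒞) : ℕ → 𝒞
  | 0 => Cc 0
  | n + 1 => Cc (n + 1) ⊞ Dd n

/-- Differential of the mapping cone of `u_•[−1]`, given by the matrix
`((d_n^C, 0), (u_n, −d_{n−1}^D))`. -/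
noncomputable def coneD {𝒞 : Type*} [Category 𝒞] [Preadditive 𝒞] [HasBinaryBiproducts 𝒞]
    (Cc Dd : ℕ → 𝒞)
    (dC : ∀ n, Cc n ⟶ Cc (n + 1)) (dD : ∀ n, Dd n ⟶ Dd (n + 1))
    (u : ∀ n, Cc n ⟶ Dd n) :
    ∀ n, coneObj Cc Dd n ⟶ coneObj Cc Dd (n + 1)
  | 0 => biprod.lift (dC 0) (u 0)
  | n + 1 => biprod.desc (biprod.lift (dC (n + 1)) (u (n + 1)))
      (biprod.lift 0 (-(dD n)))

theorem mapping_cone_left_exact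
    {𝒞 : Type*} [Category 𝒞] [Preadditive 𝒞] [HasBinaryBiproducts 𝒞]
    (Cc Dd : ℕ → 𝒞)
    (dC : ∀ n, Cc n ⟶ Cc (n + 1)) (dD : ∀ n, Dd n ⟶ Dd (n + 1))
    -- C_• is left 𝒞-exact
    (hCexact : ∀ n, IsWeakCokernel (dC n) (dC (n + 1)))
    -- D_• is left 𝒞-almost split: left 𝒞-exact, …
    (hDexact : ∀ n, IsWeakCokernel (dD n) (dD (n + 1)))
    -- … nonsplit, with D_0 indecomposable, …
    (hDnonsplit : ¬ ∃ s : Dd 1 ⟶ Dd 0, dD 0 ≫ s = 𝟙 (Dd 0))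
    -- … and every morphism with domain D_0 that is not a split mono factors through d_0^D
    (hDalmost : ∀ (X : 𝒞) (f : Dd 0 ⟶ X), (¬ ∃ r : X ⟶ Dd 0, f ≫ r = 𝟙 (Dd 0)) →
        ∃ g : Dd 1 ⟶ X, f = dD 0 ≫ g)
    -- u_• is a chain map C_• → D_•
    (u : ∀ n, Cc n ⟶ Dd n)
    (hu : ∀ n, u n ≫ dD n = dC n ≫ u (n + 1))
    -- u_0 does not factor through d_0^C
    (hu0 : ¬ ∃ g : Cc 1 ⟶ Dd 0, u 0 = dC 0 ≫ g) :
    ∀ n, IsWeakCokernel (coneD Cc Dd dC dD u n) (coneD Cc Dd dC dD u (n + 1)) := by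

  intro n
  match n with
  | 0 =>
    constructor
    · show biprod.lift (dC 0) (u 0) ≫
        biprod.desc (biprod.lift (dC 1) (u 1)) (biprod.lift 0 (-(dD 0))) = 0
      rw [biprod.lift_desc]
      apply biprod.hom_ext <;>
        simp [(hCexact 0).1, hu 0]
    · intro W h hh
      set h1 : Cc 1 ⟶ W := biprod.inl ≫ h with hh1
      set h2 : Dd 0 ⟶ W := biprod.inr ≫ h with hh2
      have hdesc : h = biprod.desc h1 h2 := by
        apply biprod.hom_ext' <;> simp [hh1, hh2]
      have key : dC 0 ≫ h1 + u 0 ≫ h2 = 0 := by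
        have := hh
        rw [show coneD Cc Dd dC dD u 0 = biprod.lift (dC 0) (u 0) from rfl,
          hdesc] at this
        have this' : biprod.lift (dC 0) (u 0) ≫ biprod.desc h1 h2 = 0 := this
        rw [biprod.lift_desc] at this'
        exact this'
      have hns : ¬ ∃ r : W ⟶ Dd 0, h2 ≫ r = 𝟙 (Dd 0) := by
        rintro ⟨r, hr⟩
        apply hu0
        refine ⟨-(h1 ≫ r), ?_⟩
        have h3 : u 0 ≫ h2 = -(dC 0 ≫ h1) := by
          rw [eq_neg_iff_add_eq_zero, add_comm]; exact key
        calc u 0 = (u 0 ≫ h2) ≫ r := by rw [Category.assoc, hr, Category.comp_id]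
        _ = (-(dC 0 ≫ h1)) ≫ r := by rw [h3]
        _ = dC 0 ≫ (-(h1 ≫ r)) := by simp
      obtain ⟨g, hg⟩ := hDalmost W h2 hns
      have hfac : dC 0 ≫ (h1 + u 1 ≫ g) = 0 := by
        have : dC 0 ≫ u 1 ≫ g = u 0 ≫ h2 := by
          rw [hg, ← Category.assoc, ← hu 0, Category.assoc]
        rw [Preadditive.comp_add, this, key]
      obtain ⟨k1, hk1⟩ := (hCexact 0).2 W (h1 + u 1 ≫ g) hfac
      refine ⟨biprod.desc k1 (-g), ?_⟩
      show h = biprod.desc (biprod.lift (dC 1) (u 1)) (biprod.lift 0 (-(dD 0))) ≫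
        biprod.desc k1 (-g)
      rw [hdesc]
      apply biprod.hom_ext'
      · simp only [biprod.inl_desc, biprod.inl_desc_assoc, biprod.lift_desc]
        rw [← hk1]
        simp [Preadditive.comp_neg]
      · simp only [biprod.inr_desc, biprod.inr_desc_assoc, biprod.lift_desc]
        simp [hg]
  | n + 1 =>
    constructor
    · show biprod.desc (biprod.lift (dC (n+1)) (u (n+1))) (biprod.lift 0 (-(dD n))) ≫
        biprod.desc (biprod.lift (dC (n+2)) (u (n+2))) (biprod.lift 0 (-(dD (n+1)))) = 0
      apply biprod.hom_ext' <;> apply biprod.hom_ext <;>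
        simp [(hCexact (n+1)).1, (hDexact n).1, hu (n+1)]
    · intro W h hh
      set h1 : Cc (n+2) ⟶ W := biprod.inl ≫ h with hh1
      set h2 : Dd (n+1) ⟶ W := biprod.inr ≫ h with hh2
      have hdesc : h = biprod.desc h1 h2 := by
        apply biprod.hom_ext' <;> simp [hh1, hh2]
      have hh' : biprod.desc (biprod.lift (dC (n+1)) (u (n+1)))
          (biprod.lift 0 (-(dD n))) ≫ biprod.desc h1 h2 = 0 := by
        rw [← hdesc]; exact hh
      have key : dC (n+1) ≫ h1 + u (n+1) ≫ h2 = 0 := by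
        have := biprod.inl ≫= hh'
        simpa [biprod.lift_desc] using this
      have key2 : dD n ≫ h2 = 0 := by
        have := biprod.inr ≫= hh'
        simp [biprod.lift_desc] at this
        exact this
      obtain ⟨g, hg⟩ := (hDexact n).2 W h2 key2
      have hfac : dC (n+1) ≫ (h1 + u (n+2) ≫ g) = 0 := by
        have : dC (n+1) ≫ u (n+2) ≫ g = u (n+1) ≫ h2 := by
          rw [hg, ← Category.assoc, ← hu (n+1), Category.assoc]
        rw [Preadditive.comp_add, this, key]
      obtain ⟨k1, hk1⟩ := (hCexact (n+1)).2 W (h1 + u (n+2) ≫ g) hfac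
      refine ⟨biprod.desc k1 (-g), ?_⟩
      show h = biprod.desc (biprod.lift (dC (n+2)) (u (n+2))) (biprod.lift 0 (-(dD (n+1)))) ≫
        biprod.desc k1 (-g)
      rw [hdesc]
      apply biprod.hom_ext'
      · simp only [biprod.inl_desc, biprod.inl_desc_assoc, biprod.lift_desc]
        rw [← hk1]
        simp [Preadditive.comp_neg]
      · simp only [biprod.inr_desc, biprod.inr_desc_assoc, biprod.lift_desc]
        simp [hg]
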